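/- Let q = 5^k. The trinomial f(x) = x^{4q+1} + x^{5q} - x^{q+4} is a permutation polynomial of F_{q^2} if and only if k is even. -/

import Mathlib

theorem stmt_15 (k : ℕ) (hk : 0 < k) (F : Type*) [Field F] [Fintype F]
    (hF : Fintype.card F = (5 ^ k) ^ 2) :
    Function.Bijective
        (fun x : F => x ^ (4 * 5 ^ k + 1) + x ^ (5 * 5 ^ k) - x ^ (5 ^ k + 4)) ↔
      Even k := by
  haveI : Fact (Nat.Prime 5) := ⟨by norm_num⟩
  -- characteristic is 5
  haveI hchar : CharP F 5 := by
    haveI := ringChar.charP F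
    have hp : (ringChar F).Prime := CharP.char_is_prime F (ringChar F)
    have hdvd : ringChar F ∣ (5 ^ k) ^ 2 := by
      rw [← hF]
      exact (CharP.cast_eq_zero_iff F (ringChar F) _).mp (FiniteField.cast_card_eq_zero F)
    have h5 : ringChar F = 5 := by
      have : ringChar F ∣ 5 := by
        have := hp.dvd_of_dvd_pow (hp.dvd_of_dvd_pow hdvd)
        exact this
      exact (Nat.prime_dvd_prime_iff_eq hp (by norm_num)).mp this
    exact h5 ▸ ringChar.charP F
  have h5 : (5 : F) = 0 := by exact_mod_cast CharP.cast_eq_zero F 5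
  have h2 : (2 : F) ≠ 0 := by
    intro h
    have : (5 : ℕ) ∣ 2 := (CharP.cast_eq_zero_iff F 5 2).mp (by exact_mod_cast h)
    omega
  -- Frobenius facts
  have fadd : ∀ a b : F, (a + b) ^ 5 ^ k = a ^ 5 ^ k + b ^ 5 ^ k := fun a b =>
    add_pow_char_pow a b 5 k
  have fsub : ∀ a b : F, (a - b) ^ 5 ^ k = a ^ 5 ^ k - b ^ 5 ^ k := fun a b =>
    sub_pow_char_pow a b k
  have fXX : ∀ a : F, (a ^ 5 ^ k) ^ 5 ^ k = a := by
    intro a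
    rw [← pow_mul]
    have h : 5 ^ k * 5 ^ k = Fintype.card F := by rw [hF]; ring
    rw [h, FiniteField.pow_card]
  have f2 : (2 : F) ^ 5 ^ k = 2 := by
    have h12 : (2 : F) = 1 + 1 := by norm_num
    rw [h12, fadd, one_pow]
  -- square root of 2
  obtain ⟨t, ht⟩ : ∃ t : F, t ^ 2 = 2 := by
    have hr5 : ringChar F ≠ 2 := by
      have : ringChar F = 5 := ringChar.eq F 5
      omega
    have hsq : IsSquare (2 : F) := by
      rw [FiniteField.isSquare_iff hr5 h2]
      have hc : Fintype.card F = 25 ^ k := by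
        rw [hF, ← pow_mul, Nat.mul_comm, pow_mul]
        norm_num
      have h8 : 25 ^ k % 8 = 1 := by
        rw [Nat.pow_mod]
        norm_num
      obtain ⟨m, hm⟩ : ∃ m, Fintype.card F / 2 = 4 * m := by
        refine ⟨25 ^ k / 8, ?_⟩
        omega
      rw [hm, pow_mul]
      have h16 : (2 : F) ^ 4 = 1 := by linear_combination 3 * h5
      rw [h16, one_pow]
    obtain ⟨r, hr⟩ := hsq
    exact ⟨r, by rw [sq]; exact hr.symm⟩
  have htne : t ≠ 0 := by
    intro h
    apply h2
    rw [← ht, h]; ring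
  have ht5 : t ^ 5 = -t := by linear_combination (t ^ 3 + 2 * t) * ht + t * h5
  have htk : ∀ j : ℕ, t ^ 5 ^ j = (-1) ^ j * t := by
    intro j
    induction j with
    | zero => simp
    | succ n ih =>
      rw [pow_succ, pow_mul, ih, mul_pow, ht5]
      have hn : ((-1 : F) ^ n) ^ 5 = (-1) ^ n := by
        rcases Nat.even_or_odd n with h | h
        · rw [h.neg_one_pow]; norm_num
        · rw [h.neg_one_pow]; norm_num
      rw [hn, pow_succ]
      ring
  -- splitting of f
  have hsplit : ∀ z : F, z ^ (4 * 5 ^ k + 1) + z ^ (5 * 5 ^ k) - z ^ (5 ^ k + 4) =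
      (z ^ 5 ^ k) ^ 4 * z + (z ^ 5 ^ k) ^ 5 - z ^ 5 ^ k * z ^ 4 := by
    intro z
    rw [← pow_mul, ← pow_mul, ← pow_add, ← pow_succ, Nat.mul_comm, Nat.mul_comm 5 (5 ^ k),
      Nat.mul_comm]
  constructor
  · -- Bijective → Even k
    intro hbij
    by_contra hodd
    have hko : Odd k := Nat.odd_iff.mpr (Nat.not_even_iff.mp hodd)
    have htko : t ^ 5 ^ k = -t := by rw [htk k, hko.neg_one_pow]; ring
    have hx0 : (1 + 2 * t) ^ 5 ^ k = 1 - 2 * t := by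
      rw [fadd, one_pow, mul_pow, f2, htko]; ring
    have hcol : (fun x : F => x ^ (4 * 5 ^ k + 1) + x ^ (5 * 5 ^ k) - x ^ (5 ^ k + 4)) (1 + 2 * t)
        = (fun x : F => x ^ (4 * 5 ^ k + 1) + x ^ (5 * 5 ^ k) - x ^ (5 ^ k + 4)) 1 := by
      simp only [hsplit, hx0, one_pow]
      linear_combination (32 * t ^ 3 + 80 * t ^ 2 + 16 * t + 200) * ht + (2 * t + 80) * h5
    have := hbij.injective hcol
    apply htne
    have h2t : 2 * t = 0 := by linear_combination this
    rcases mul_eq_zero.mp h2t with h | h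
    · exact absurd h h2
    · exact h
  · -- Even k → Bijective
    intro hke
    have htq : t ^ 5 ^ k = t := by rw [htk k, hke.neg_one_pow]; ring
    rw [← Finite.injective_iff_bijective]
    intro x y hxy0
    simp only at hxy0
    rw [hsplit x, hsplit y] at hxy0
    have hXx : (x ^ 5 ^ k) ^ 5 ^ k = x := fXX x
    have hYy : (y ^ 5 ^ k) ^ 5 ^ k = y := fXX y
    -- conjugate equation
    have hphi : x ^ 4 * x ^ 5 ^ k + x ^ 5 - x * (x ^ 5 ^ k) ^ 4
        = y ^ 4 * y ^ 5 ^ k + y ^ 5 - y * (y ^ 5 ^ k) ^ 4 := by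
      have e := congrArg (· ^ 5 ^ k) hxy0
      rw [fsub, fsub, fadd, fadd] at e
      simp only [mul_pow] at e
      rw [pow_right_comm (x ^ 5 ^ k) 4, pow_right_comm (x ^ 5 ^ k) 5, pow_right_comm x 4,
        pow_right_comm (y ^ 5 ^ k) 4, pow_right_comm (y ^ 5 ^ k) 5, pow_right_comm y 4,
        hXx, hYy] at e
      linear_combination e
    -- trace equality
    have hs : x + x ^ 5 ^ k = y + y ^ 5 ^ k := by
      have hsum : (x + x ^ 5 ^ k) ^ 5 = (y + y ^ 5 ^ k) ^ 5 := by
        rw [add_pow_char, add_pow_char]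
        linear_combination hxy0 + hphi
      have h0 : ((x + x ^ 5 ^ k) - (y + y ^ 5 ^ k)) ^ 5 = 0 := by
        rw [sub_pow_char, hsum]; ring
      have := pow_eq_zero_iff (n := 5) (by norm_num) |>.mp h0
      linear_combination this
    have hY : y ^ 5 ^ k = x + x ^ 5 ^ k - y := by linear_combination -hs
    rw [hY] at hxy0 hphi
    -- key identity
    have key : (x - y) * (((x - y) ^ 2 + 2 * (x + x ^ 5 ^ k) ^ 2) ^ 2
        - 2 * (2 * (x + x ^ 5 ^ k) * (y - x ^ 5 ^ k)) ^ 2) = 0 := by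
      linear_combination 3 * hxy0 - 3 * hphi + (y ^ 5 - 3 * (x ^ 5 ^ k) * y ^ 4
        + 2 * (x ^ 5 ^ k) ^ 2 * y ^ 3 - 2 * (x ^ 5 ^ k) ^ 3 * y ^ 2 - (x ^ 5 ^ k) ^ 4 * y
        - 2 * x * y ^ 4 + 4 * x * (x ^ 5 ^ k) * y ^ 3 - 2 * x * (x ^ 5 ^ k) ^ 2 * y ^ 2
        - 4 * x * (x ^ 5 ^ k) ^ 3 * y + x * (x ^ 5 ^ k) ^ 4 + 2 * x ^ 2 * (x ^ 5 ^ k) * y ^ 2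
        - 10 * x ^ 2 * (x ^ 5 ^ k) ^ 2 * y + 6 * x ^ 2 * (x ^ 5 ^ k) ^ 3 + 4 * x ^ 3 * y ^ 2
        - 12 * x ^ 3 * (x ^ 5 ^ k) * y + 10 * x ^ 3 * (x ^ 5 ^ k) ^ 2 - 6 * x ^ 4 * y
        + 9 * x ^ 4 * (x ^ 5 ^ k) + 3 * x ^ 5) * h5
    -- auxiliary Frobenius actions
    have ha5 : (x - y) ^ 5 ^ k = -(x - y) := by rw [fsub, hY]; ring
    have hb5 : (y - x ^ 5 ^ k) ^ 5 ^ k = -(y - x ^ 5 ^ k) := by rw [fsub, hY, hXx]; ring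
    have hs5 : (x + x ^ 5 ^ k) ^ 5 ^ k = x + x ^ 5 ^ k := by rw [fadd, hXx]; ring
    have hsub0 : x - y = 0 → x = y := fun h => by linear_combination h
    rcases mul_eq_zero.mp key with h | h
    · exact hsub0 h
    · -- factor using t
      have hfac : ((x - y) ^ 2 + 2 * (x + x ^ 5 ^ k) ^ 2
            - t * (2 * (x + x ^ 5 ^ k) * (y - x ^ 5 ^ k)))
          * ((x - y) ^ 2 + 2 * (x + x ^ 5 ^ k) ^ 2
            + t * (2 * (x + x ^ 5 ^ k) * (y - x ^ 5 ^ k))) = 0 := by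
        linear_combination h - (2 * (x + x ^ 5 ^ k) * (y - x ^ 5 ^ k)) ^ 2 * ht
      have hodd5 : Odd (5 ^ k) := Odd.pow ⟨2, by norm_num⟩
      have main : ∀ ε : F, ε ^ 5 ^ k = ε → ε ≠ 0 →
          (x - y) ^ 2 + 2 * (x + x ^ 5 ^ k) ^ 2
            = ε * (2 * (x + x ^ 5 ^ k) * (y - x ^ 5 ^ k)) → x = y := by
        intro ε hε hεne hA
        have e := congrArg (· ^ 5 ^ k) hA
        rw [fadd] at e
        simp only [mul_pow] at e
        rw [pow_right_comm (x - y) 2,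
          pow_right_comm (x + x ^ 5 ^ k) 2, f2, hε, ha5, hb5, hs5] at e
        have hA0 : (x - y) ^ 2 + 2 * (x + x ^ 5 ^ k) ^ 2 = 0 := by
          have h2A : (2 : F) * ((x - y) ^ 2 + 2 * (x + x ^ 5 ^ k) ^ 2) = 0 := by
            linear_combination hA + e
          rcases mul_eq_zero.mp h2A with h' | h'
          · exact absurd h' h2
          · exact h'
        have hB0 : ε * (2 * (x + x ^ 5 ^ k) * (y - x ^ 5 ^ k)) = 0 := by
          linear_combination hA0 - hA
        rcases mul_eq_zero.mp hB0 with h' | h'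
        · exact absurd h' hεne
        rcases mul_eq_zero.mp h' with h' | hb0
        · rcases mul_eq_zero.mp h' with h' | hs0
          · exact absurd h' h2
          · -- s = 0
            have : (x - y) ^ 2 = 0 := by
              linear_combination hA0 - 2 * (x + x ^ 5 ^ k) * hs0
            have := pow_eq_zero_iff (n := 2) (by norm_num) |>.mp this
            exact hsub0 this
        · -- b = 0 : second factorization
          have hfac2 : ((x - y) - 2 * t * (x + x ^ 5 ^ k))
              * ((x - y) + 2 * t * (x + x ^ 5 ^ k)) = 0 := by
            linear_combination hA0 - 4 * (x + x ^ 5 ^ k) ^ 2 * ht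
              - 2 * (x + x ^ 5 ^ k) ^ 2 * h5
          rcases mul_eq_zero.mp hfac2 with hz | hz
          · have h' : x - y = 2 * t * (x + x ^ 5 ^ k) := by linear_combination hz
            have e2 := congrArg (· ^ 5 ^ k) h'
            rw [ha5] at e2
            simp only [mul_pow] at e2
            rw [f2, htq, hs5] at e2
            have h2a : (2 : F) * (x - y) = 0 := by linear_combination h' - e2
            rcases mul_eq_zero.mp h2a with h'' | h''
            · exact absurd h'' h2
            · exact hsub0 h''
          · have h' : y - x = 2 * t * (x + x ^ 5 ^ k) := by linear_combination -1 * hz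
            have hya : (y - x) ^ 5 ^ k = -(y - x) := by rw [fsub, hY]; ring
            have e2 := congrArg (· ^ 5 ^ k) h'
            rw [hya] at e2
            simp only [mul_pow] at e2
            rw [f2, htq, hs5] at e2
            have h2a : (2 : F) * (y - x) = 0 := by linear_combination h' - e2
            rcases mul_eq_zero.mp h2a with h'' | h''
            · exact absurd h'' h2
            · linear_combination -h''
      rcases mul_eq_zero.mp hfac with hf | hf
      · exact main t htq htne (by linear_combination hf)
      · refine main (-t) ?_ (neg_ne_zero.mpr htne) (by linear_combination hf)
        rw [hodd5.neg_pow, htq]
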